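/- Assume transaction costs are zero, so G(a) = Σ_{t<m} a_t·(H_T^{(t)} − H_t^{(t)}) and all policies are admissible. Let a* be a policy minimizing E_P[exp(−G(a))] over all policies, with 0 < E_P[exp(−G(a*))] < ∞, and define Q* by dQ*/dP = exp(−G(a*)) / E_P[exp(−G(a*))]. Then Q* is the minimal entropy martingale measure: for every probability measure Q equivalent to P satisfying the martingale condition E_Q[H_T^{(t,i)} | 𝓕_t] = H_t^{(t,i)} for all t < m and all i, the relative entropy satisfies H(Q* | P) ≤ H(Q | P). -/

import Mathlib

open MeasureTheory ENNReal Real Filter Set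

noncomputable section

variable {Ω : Type*}

/-- A policy: at each time `t < m`, an `F t`-measurable, essentially bounded action in `ℝ^n`. -/
def IsPolicy {mΩ : MeasurableSpace Ω} (P : Measure Ω) (m n : ℕ) (F : ℕ → MeasurableSpace Ω)
    (a : ℕ → Ω → Fin n → ℝ) : Prop :=
  ∀ t < m, Measurable[F t] (a t) ∧ ∃ C : ℝ, ∀ᵐ ω ∂P, ∀ i, |a t ω i| ≤ C

/-- Terminal gain of a policy with zero transaction costs:
`G(a) = Σ_{t<m} a_t · (H_T^{(t)} - H_t^{(t)})`. -/
def linGain (m n : ℕ) (Hmid HT : ℕ → Ω → Fin n → ℝ)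
    (a : ℕ → Ω → Fin n → ℝ) (ω : Ω) : ℝ :=
  ∑ t ∈ Finset.range m, ∑ i, a t ω i * (HT t ω i - Hmid t ω i)

open Classical in
/-- Relative entropy `H(Q | P) = E_Q[log (dQ/dP)]`, valued in `EReal` (it equals `+∞`
when the logarithm of the density is not `Q`-integrable). -/
def relEnt {mΩ : MeasurableSpace Ω} (Q P : Measure Ω) : EReal :=
  if Integrable (fun ω => Real.log (Q.rnDeriv P ω).toReal) Q then
    ((∫ ω, Real.log (Q.rnDeriv P ω).toReal ∂Q : ℝ) : EReal)
  else ⊤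

/-- An a.e.-bounded a.e.-strongly-measurable function is integrable w.r.t. a finite measure. -/
lemma integrable_of_ae_bound {mΩ : MeasurableSpace Ω} {μ : Measure Ω} [IsFiniteMeasure μ]
    {f : Ω → ℝ} (hf : AEStronglyMeasurable f μ) {C : ℝ} (h : ∀ᵐ ω ∂μ, |f ω| ≤ C) :
    Integrable f μ :=
  (integrable_const C).mono' hf (by simpa [Real.norm_eq_abs] using h)

/-- Epsilon-argument: if `0 ≤ I + ε * K` for all small positive `ε`, then `0 ≤ I`. -/
lemma nonneg_of_forall_small (I K ε₀ : ℝ) (hK : 0 ≤ K) (hε₀ : 0 < ε₀)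
    (h : ∀ ε : ℝ, 0 < ε → ε ≤ ε₀ → 0 ≤ I + ε * K) : 0 ≤ I := by
  by_contra hI
  push_neg at hI
  have hK1 : (0:ℝ) < K + 1 := by linarith
  set ε := min ε₀ (-I / (2 * (K + 1))) with hε
  have hIpos : (0:ℝ) < -I := by linarith
  have hεpos : 0 < ε := lt_min hε₀ (by positivity)
  have h1 := h ε hεpos (min_le_left _ _)
  have h2 : ε ≤ -I / (2 * (K + 1)) := min_le_right _ _
  have h3 : ε * K ≤ (-I / (2 * (K + 1))) * K := mul_le_mul_of_nonneg_right h2 hK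
  have h4 : (-I / (2 * (K + 1))) * K ≤ -I / 2 := by
    rw [div_mul_eq_mul_div, div_le_div_iff₀ (by positivity) (by norm_num)]
    nlinarith
  linarith

/-- With zero transaction costs, the measure `Q*` with density
`exp(-G(a*))/E_P[exp(-G(a*))]`, where `a*` minimizes `E_P[exp(-G(a))]`, is the minimal
entropy martingale measure: `H(Q* | P) ≤ H(Q | P)` for every equivalent martingale
measure `Q`. -/
theorem stmt_11
    {mΩ : MeasurableSpace Ω} (P : Measure Ω) [IsProbabilityMeasure P]
    (m n : ℕ) (F : ℕ → MeasurableSpace Ω) (hF_mono : Monotone F) (hF_le : ∀ t, F t ≤ mΩ)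
    (Hmid HT : ℕ → Ω → Fin n → ℝ)
    (hHmid_meas : ∀ t < m, Measurable[F t] (Hmid t))
    (hHT_meas : ∀ t < m, Measurable[F m] (HT t))
    (hHmid_bdd : ∀ t < m, ∃ C : ℝ, ∀ᵐ ω ∂P, ∀ i, |Hmid t ω i| ≤ C)
    (hHT_bdd : ∀ t < m, ∃ C : ℝ, ∀ᵐ ω ∂P, ∀ i, |HT t ω i| ≤ C)
    (astar : ℕ → Ω → Fin n → ℝ) (hastar : IsPolicy P m n F astar)
    (hmin : ∀ a, IsPolicy P m n F a →
      (∫⁻ ω, ENNReal.ofReal (Real.exp (-linGain m n Hmid HT astar ω)) ∂P) ≤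
        ∫⁻ ω, ENNReal.ofReal (Real.exp (-linGain m n Hmid HT a ω)) ∂P)
    (hZpos : 0 < ∫⁻ ω, ENNReal.ofReal (Real.exp (-linGain m n Hmid HT astar ω)) ∂P)
    (hZfin : (∫⁻ ω, ENNReal.ofReal (Real.exp (-linGain m n Hmid HT astar ω)) ∂P) ≠ ∞) :
    let Qstar : Measure Ω := P.withDensity (fun ω =>
      ENNReal.ofReal (Real.exp (-linGain m n Hmid HT astar ω)) /
        ∫⁻ ω', ENNReal.ofReal (Real.exp (-linGain m n Hmid HT astar ω')) ∂P)
    ∀ Q : Measure Ω, IsProbabilityMeasure Q → Q ≪ P → P ≪ Q →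
      (∀ t < m, ∀ i : Fin n, (Q[fun ω => HT t ω i | F t]) =ᵐ[Q] fun ω => Hmid t ω i) →
      relEnt Qstar P ≤ relEnt Q P := by
  classical
  intro Qstar Q hQprob hQP hPQ hEMM
  set G : Ω → ℝ := linGain m n Hmid HT astar with hG
  set Z : ℝ≥0∞ := ∫⁻ ω, ENNReal.ofReal (Real.exp (-G ω)) ∂P with hZdef
  have hQstar_def : Qstar = P.withDensity (fun ω => ENNReal.ofReal (Real.exp (-G ω)) / Z) := rfl
  have hGsum : ∀ ω, G ω = ∑ t ∈ Finset.range m, ∑ i,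
      astar t ω i * (HT t ω i - Hmid t ω i) := fun ω => rfl
  -- measurability of G
  have hGmeas : Measurable G := by
    have : Measurable fun ω => ∑ t ∈ Finset.range m, ∑ i,
        astar t ω i * (HT t ω i - Hmid t ω i) := by
      refine Finset.measurable_sum _ fun t ht => ?_
      refine Finset.measurable_sum _ fun i _ => ?_
      have ht' := Finset.mem_range.mp ht
      exact (((hastar t ht').1.mono (hF_le t) le_rfl).eval).mul
        ((((hHT_meas t ht').mono (hF_le m) le_rfl).eval).sub
          (((hHmid_meas t ht').mono (hF_le t) le_rfl).eval))
    exact this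
  -- uniform bounds
  have hCa' : ∀ t, ∃ C : ℝ, t < m → ∀ᵐ ω ∂P, ∀ i, |astar t ω i| ≤ C := fun t => by
    by_cases ht : t < m
    · exact ((hastar t ht).2).imp fun C hC _ => hC
    · exact ⟨0, fun h => absurd h ht⟩
  have hCT' : ∀ t, ∃ C : ℝ, t < m → ∀ᵐ ω ∂P, ∀ i, |HT t ω i| ≤ C := fun t => by
    by_cases ht : t < m
    · exact (hHT_bdd t ht).imp fun C hC _ => hC
    · exact ⟨0, fun h => absurd h ht⟩
  have hCM' : ∀ t, ∃ C : ℝ, t < m → ∀ᵐ ω ∂P, ∀ i, |Hmid t ω i| ≤ C := fun t => by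
    by_cases ht : t < m
    · exact (hHmid_bdd t ht).imp fun C hC _ => hC
    · exact ⟨0, fun h => absurd h ht⟩
  choose Ca hCa using hCa'
  choose CT hCT using hCT'
  choose CM hCM using hCM'
  set B : ℝ := ∑ t ∈ Finset.range m, ∑ _i : Fin n, Ca t * (CT t + CM t) with hB
  set B0 : ℝ := max B 0 with hB0
  have hB0nn : (0:ℝ) ≤ B0 := le_max_right _ _
  have hGbdd : ∀ᵐ ω ∂P, |G ω| ≤ B0 := by
    have hae : ∀ᵐ ω ∂P, ∀ t ∈ Finset.range m,
        (∀ i, |astar t ω i| ≤ Ca t) ∧ (∀ i, |HT t ω i| ≤ CT t) ∧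
          (∀ i, |Hmid t ω i| ≤ CM t) := by
      rw [eventually_all_finset]
      intro t ht
      have ht' := Finset.mem_range.mp ht
      filter_upwards [hCa t ht', hCT t ht', hCM t ht'] with ω h1 h2 h3
      exact ⟨h1, h2, h3⟩
    filter_upwards [hae] with ω hω
    rw [hGsum ω]
    refine le_trans (Finset.abs_sum_le_sum_abs _ _) (le_trans (Finset.sum_le_sum ?_)
      (le_max_left _ _))
    intro t ht
    refine le_trans (Finset.abs_sum_le_sum_abs _ _) (Finset.sum_le_sum ?_)
    intro i _
    obtain ⟨h1, h2, h3⟩ := hω t ht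
    rw [abs_mul]
    have ha0 : (0:ℝ) ≤ Ca t := le_trans (abs_nonneg _) (h1 i)
    refine mul_le_mul (h1 i) ?_ (abs_nonneg _) ha0
    exact le_trans (abs_sub _ _) (add_le_add (h2 i) (h3 i))
  -- integrability of exponentials
  have hexpb : ∀ c : ℝ, ∀ᵐ ω ∂P, Real.exp (-(c * G ω)) ≤ Real.exp (|c| * B0) := by
    intro c
    filter_upwards [hGbdd] with ω hω
    refine Real.exp_le_exp.mpr (le_trans (neg_le_abs _) ?_)
    rw [abs_mul]
    exact mul_le_mul_of_nonneg_left hω (abs_nonneg c)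
  have hfinc : ∀ c : ℝ, (∫⁻ ω, ENNReal.ofReal (Real.exp (-(c * G ω))) ∂P) ≠ ∞ := by
    intro c
    refine ne_of_lt (lt_of_le_of_lt (lintegral_mono_ae ((hexpb c).mono fun ω h =>
      ENNReal.ofReal_le_ofReal h)) ?_)
    rw [lintegral_const]
    simp [ENNReal.ofReal_lt_top]
  have hIexp : ∀ c : ℝ, Integrable (fun ω => Real.exp (-(c * G ω))) P := by
    intro c
    refine integrable_of_ae_bound ((Real.measurable_exp.comp
      ((hGmeas.const_mul c).neg)).aestronglyMeasurable) (C := Real.exp (|c| * B0))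
      ((hexpb c).mono fun ω h => ?_)
    rwa [abs_of_pos (Real.exp_pos _)]
  have hIexp1 : Integrable (fun ω => Real.exp (-G ω)) P := by
    have := hIexp 1
    simpa using this
  have hintI : Integrable (fun ω => G ω * Real.exp (-G ω)) P := by
    refine integrable_of_ae_bound ((hGmeas.mul (Real.measurable_exp.comp
      hGmeas.neg)).aestronglyMeasurable) (C := B0 * Real.exp B0) ?_
    filter_upwards [hGbdd] with ω hω
    rw [abs_mul, abs_of_pos (Real.exp_pos _)]
    refine mul_le_mul hω (Real.exp_le_exp.mpr ?_) (Real.exp_pos _).le hB0nn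
    have := abs_le.mp hω
    linarith [this.1]
  -- scaled policies and the real minimality inequality
  have hpol : ∀ c : ℝ, IsPolicy P m n F (fun t ω i => c * astar t ω i) := by
    intro c t ht
    refine ⟨(measurable_const_smul (M := ℝ) c).comp (hastar t ht).1,
      ⟨|c| * Ca t, ?_⟩⟩
    filter_upwards [hCa t ht] with ω h i
    rw [abs_mul]
    exact mul_le_mul_of_nonneg_left (h i) (abs_nonneg c)
  have hlin : ∀ c : ℝ, linGain m n Hmid HT (fun t ω i => c * astar t ω i)
      = fun ω => c * G ω := by
    intro c
    funext ω
    rw [hG]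
    simp only [linGain, Finset.mul_sum, mul_assoc]
  have hint_ofReal : ∀ (f : Ω → ℝ), Measurable f →
      (∫ ω, Real.exp (f ω) ∂P) = (∫⁻ ω, ENNReal.ofReal (Real.exp (f ω)) ∂P).toReal := by
    intro f hf
    rw [integral_eq_lintegral_of_nonneg_ae (ae_of_all _ fun ω => (Real.exp_pos _).le)
      (Real.measurable_exp.comp hf).aestronglyMeasurable]
  have hminR : ∀ c : ℝ, (∫ ω, Real.exp (-G ω) ∂P) ≤ ∫ ω, Real.exp (-(c * G ω)) ∂P := by
    intro c
    have h := hmin _ (hpol c)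
    simp only [hlin c] at h
    have e1 : (∫ ω, Real.exp (-G ω) ∂P) = Z.toReal := hint_ofReal _ hGmeas.neg
    have e2 : (∫ ω, Real.exp (-(c * G ω)) ∂P)
        = (∫⁻ ω, ENNReal.ofReal (Real.exp (-(c * G ω))) ∂P).toReal :=
      hint_ofReal _ (hGmeas.const_mul c).neg
    rw [e1, e2]
    exact (ENNReal.toReal_le_toReal hZfin (hfinc c)).mpr h
  -- first-order condition: I := ∫ G e^{-G} dP ≥ 0
  set I : ℝ := ∫ ω, G ω * Real.exp (-G ω) ∂P with hIdef
  set K : ℝ := B0 ^ 2 * Real.exp B0 with hK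
  have hKnn : (0:ℝ) ≤ K := by positivity
  have hI : 0 ≤ I := by
    refine nonneg_of_forall_small I K (B0 + 1)⁻¹ hKnn (by positivity) ?_
    intro ε hε hε'
    have h1 := hminR (1 - ε)
    have hptw : ∀ᵐ ω ∂P, Real.exp (-((1 - ε) * G ω)) - Real.exp (-G ω)
        ≤ ε * (G ω * Real.exp (-G ω)) + ε * (ε * K) := by
      filter_upwards [hGbdd] with ω hω
      have habs := abs_le.mp hω
      have hx : |ε * G ω| ≤ 1 := by
        rw [abs_mul, abs_of_pos hε]
        calc ε * |G ω| ≤ (B0 + 1)⁻¹ * B0 :=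
              mul_le_mul hε' hω (abs_nonneg _) (by positivity)
          _ ≤ 1 := by
              rw [inv_mul_le_iff₀ (by positivity)]
              linarith
      have h2 := Real.abs_exp_sub_one_sub_id_le hx
      have h3 : Real.exp (ε * G ω) ≤ 1 + ε * G ω + (ε * G ω) ^ 2 := by
        have := abs_le.mp h2
        linarith [this.2]
      have h4 : Real.exp (-((1 - ε) * G ω)) = Real.exp (-G ω) * Real.exp (ε * G ω) := by
        rw [← Real.exp_add]; ring_nf
      have hexppos := (Real.exp_pos (-G ω)).le
      have h5 : Real.exp (-G ω) * Real.exp (ε * G ω) - Real.exp (-G ω)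
          ≤ Real.exp (-G ω) * (ε * G ω + (ε * G ω) ^ 2) := by
        nlinarith [mul_le_mul_of_nonneg_left h3 hexppos]
      have hexpB : Real.exp (-G ω) ≤ Real.exp B0 := Real.exp_le_exp.mpr (by linarith [habs.1])
      have hG2 : G ω ^ 2 ≤ B0 ^ 2 := sq_le_sq' (by linarith [habs.1]) habs.2
      have h8 : Real.exp (-G ω) * (ε * G ω) ^ 2 ≤ ε * (ε * K) := by
        rw [hK]
        have e : Real.exp (-G ω) * (ε * G ω) ^ 2
            = ε * (ε * (G ω ^ 2 * Real.exp (-G ω))) := by ring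
        rw [e]
        have hbb : G ω ^ 2 * Real.exp (-G ω) ≤ B0 ^ 2 * Real.exp B0 :=
          mul_le_mul hG2 hexpB hexppos (by positivity)
        exact mul_le_mul_of_nonneg_left (mul_le_mul_of_nonneg_left hbb hε.le) hε.le
      have h6 : Real.exp (-G ω) * (ε * G ω + (ε * G ω) ^ 2)
          = ε * (G ω * Real.exp (-G ω)) + Real.exp (-G ω) * (ε * G ω) ^ 2 := by ring
      rw [h4]
      linarith
    have hIL : Integrable (fun ω => Real.exp (-((1 - ε) * G ω)) - Real.exp (-G ω)) P :=
      (hIexp (1 - ε)).sub hIexp1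
    have hIR : Integrable (fun ω => ε * (G ω * Real.exp (-G ω)) + ε * (ε * K)) P :=
      (hintI.const_mul ε).add (integrable_const _)
    have hmono := integral_mono_ae hIL hIR hptw
    rw [integral_sub (hIexp (1 - ε)) hIexp1, integral_add (hintI.const_mul ε)
      (integrable_const _), integral_const_mul, integral_const] at hmono
    simp only [measure_univ, probReal_univ, ENNReal.toReal_one, one_smul] at hmono
    have h9 : 0 ≤ ε * I + ε * (ε * K) := by
      rw [hIdef]
      linarith [hmono, h1]
    have h10 : ε * 0 ≤ ε * (I + ε * K) := by nlinarith [h9]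
    exact le_of_mul_le_mul_left h10 hε
  -- basic facts about Z and Qstar
  have hZ'pos : 0 < Z.toReal := ENNReal.toReal_pos hZpos.ne' hZfin
  set Z' : ℝ := Z.toReal with hZ'
  have hg_meas : Measurable (fun ω => ENNReal.ofReal (Real.exp (-G ω)) / Z) :=
    (ENNReal.measurable_ofReal.comp (Real.measurable_exp.comp hGmeas.neg)).div_const Z
  have hrn : Qstar.rnDeriv P =ᵐ[P] fun ω => ENNReal.ofReal (Real.exp (-G ω)) / Z := by
    rw [hQstar_def]
    exact Measure.rnDeriv_withDensity P hg_meas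
  have hQstarP : Qstar ≪ P := by
    rw [hQstar_def]; exact withDensity_absolutelyContinuous _ _
  have hQstar_prob : IsProbabilityMeasure Qstar := by
    constructor
    rw [hQstar_def, withDensity_apply _ MeasurableSet.univ, Measure.restrict_univ]
    simp only [div_eq_mul_inv]
    rw [lintegral_mul_const' Z⁻¹ _ (ENNReal.inv_ne_top.mpr hZpos.ne'), ← hZdef]
    exact ENNReal.mul_inv_cancel hZpos.ne' hZfin
  have hlogstar : (fun ω => Real.log ((Qstar.rnDeriv P ω).toReal))
      =ᵐ[P] fun ω => -G ω - Real.log Z' := by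
    filter_upwards [hrn] with ω h
    rw [h, ENNReal.toReal_div, ENNReal.toReal_ofReal (Real.exp_pos _).le,
      Real.log_div (Real.exp_ne_zero _) hZ'pos.ne', Real.log_exp]
  have hlogstarQ : (fun ω => Real.log ((Qstar.rnDeriv P ω).toReal))
      =ᵐ[Qstar] fun ω => -G ω - Real.log Z' := hlogstar.filter_mono hQstarP.ae_le
  have hGbddQstar : ∀ᵐ ω ∂Qstar, |G ω| ≤ B0 := hGbdd.filter_mono hQstarP.ae_le
  have hintGstar : Integrable G Qstar :=
    integrable_of_ae_bound hGmeas.aestronglyMeasurable hGbddQstar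
  have hint_star : Integrable (fun ω => Real.log ((Qstar.rnDeriv P ω).toReal)) Qstar :=
    ((hintGstar.neg).sub (integrable_const _)).congr hlogstarQ.symm
  -- value of the Qstar-side entropy
  have hGQstar : ∫ ω, G ω ∂Qstar = I / Z' := by
    have e : ∫ ω, G ω ∂Qstar = ∫ ω, (Real.exp (-G ω) / Z') * G ω ∂P := by
      rw [← integral_rnDeriv_smul hQstarP]
      refine integral_congr_ae ?_
      filter_upwards [hrn] with ω h
      rw [h, smul_eq_mul, ENNReal.toReal_div, ENNReal.toReal_ofReal (Real.exp_pos _).le]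
    rw [e]
    have e2 : (fun ω => (Real.exp (-G ω) / Z') * G ω)
        = fun ω => (G ω * Real.exp (-G ω)) / Z' := by
      funext ω; ring
    have hdiv0 : ∫ ω, (G ω * Real.exp (-G ω)) / Z' ∂P
        = (∫ ω, G ω * Real.exp (-G ω) ∂P) / Z' := integral_div _ _
    rw [e2, hdiv0, ← hIdef]
  have hstar_val : ∫ ω, Real.log ((Qstar.rnDeriv P ω).toReal) ∂Qstar
      = -(I / Z') - Real.log Z' := by
    have hsub : ∫ ω, (-G ω - Real.log Z') ∂Qstar
        = (∫ ω, -G ω ∂Qstar) - ∫ _ω, (Real.log Z' : ℝ) ∂Qstar :=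
      integral_sub hintGstar.neg (integrable_const _)
    rw [integral_congr_ae hlogstarQ, hsub, integral_neg, integral_const, hGQstar]
    simp [measure_univ]
  have hstar_le : ∫ ω, Real.log ((Qstar.rnDeriv P ω).toReal) ∂Qstar ≤ -Real.log Z' := by
    rw [hstar_val]
    have : 0 ≤ I / Z' := div_nonneg hI hZ'pos.le
    linarith
  -- martingale property: E_Q[G] = 0
  have hEQG : ∫ ω, G ω ∂Q = 0 := by
    have hterm : ∀ t ∈ Finset.range m, ∀ i : Fin n,
        ∫ ω, astar t ω i * (HT t ω i - Hmid t ω i) ∂Q = 0 := by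
      intro t ht i
      have ht' := Finset.mem_range.mp ht
      have hameas : Measurable fun ω => astar t ω i :=
        ((hastar t ht').1.mono (hF_le t) le_rfl).eval
      have hXmeas : Measurable fun ω => HT t ω i :=
        ((hHT_meas t ht').mono (hF_le m) le_rfl).eval
      have hYmeas : Measurable fun ω => Hmid t ω i :=
        ((hHmid_meas t ht').mono (hF_le t) le_rfl).eval
      have haQ : ∀ᵐ ω ∂Q, ∀ j, |astar t ω j| ≤ Ca t := (hCa t ht').filter_mono hQP.ae_le
      have hXQ : ∀ᵐ ω ∂Q, ∀ j, |HT t ω j| ≤ CT t := (hCT t ht').filter_mono hQP.ae_le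
      have hYQ : ∀ᵐ ω ∂Q, ∀ j, |Hmid t ω j| ≤ CM t := (hCM t ht').filter_mono hQP.ae_le
      have hint_aX : Integrable (fun ω => astar t ω i * HT t ω i) Q := by
        refine integrable_of_ae_bound (hameas.mul hXmeas).aestronglyMeasurable
          (C := Ca t * CT t) ?_
        filter_upwards [haQ, hXQ] with ω h1 h2
        rw [abs_mul]
        exact mul_le_mul (h1 i) (h2 i) (abs_nonneg _) (le_trans (abs_nonneg _) (h1 i))
      have hint_aY : Integrable (fun ω => astar t ω i * Hmid t ω i) Q := by
        refine integrable_of_ae_bound (hameas.mul hYmeas).aestronglyMeasurable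
          (C := Ca t * CM t) ?_
        filter_upwards [haQ, hYQ] with ω h1 h2
        rw [abs_mul]
        exact mul_le_mul (h1 i) (h2 i) (abs_nonneg _) (le_trans (abs_nonneg _) (h1 i))
      have hint_X : Integrable (fun ω => HT t ω i) Q := by
        refine integrable_of_ae_bound hXmeas.aestronglyMeasurable (C := CT t) ?_
        filter_upwards [hXQ] with ω h
        exact h i
      have hsm : StronglyMeasurable[F t] (fun ω => astar t ω i) :=
        ((measurable_pi_apply i).comp (hastar t ht').1).stronglyMeasurable
      have hmul : (Q[fun ω => astar t ω i * HT t ω i|F t])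
          =ᵐ[Q] fun ω => astar t ω i * (Q[fun ω => HT t ω i|F t]) ω := by
        exact condExp_mul_of_stronglyMeasurable_left (μ := Q) (m := F t) hsm hint_aX hint_X
      have e1 : ∫ ω, astar t ω i * HT t ω i ∂Q = ∫ ω, astar t ω i * Hmid t ω i ∂Q := by
        haveI : SigmaFinite (Q.trim (hF_le t)) := inferInstance
        rw [← integral_condExp (μ := Q) (hF_le t) (f := fun ω => astar t ω i * HT t ω i)]
        rw [integral_congr_ae hmul]
        refine integral_congr_ae ?_
        filter_upwards [hEMM t ht' i] with ω h
        rw [h]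
      have e2 : (fun ω => astar t ω i * (HT t ω i - Hmid t ω i))
          = fun ω => astar t ω i * HT t ω i - astar t ω i * Hmid t ω i := by
        funext ω; ring
      rw [e2, integral_sub hint_aX hint_aY, e1, sub_self]
    have hint_sum : ∀ t ∈ Finset.range m,
        Integrable (fun ω => ∑ i, astar t ω i * (HT t ω i - Hmid t ω i)) Q := by
      intro t ht
      have ht' := Finset.mem_range.mp ht
      refine integrable_finset_sum _ fun i _ => ?_
      have hameas : Measurable fun ω => astar t ω i :=
        ((hastar t ht').1.mono (hF_le t) le_rfl).eval
      have hXmeas : Measurable fun ω => HT t ω i :=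
        ((hHT_meas t ht').mono (hF_le m) le_rfl).eval
      have hYmeas : Measurable fun ω => Hmid t ω i :=
        ((hHmid_meas t ht').mono (hF_le t) le_rfl).eval
      refine integrable_of_ae_bound
        ((hameas.mul (hXmeas.sub hYmeas)).aestronglyMeasurable)
        (C := Ca t * (CT t + CM t)) ?_
      filter_upwards [(hCa t ht').filter_mono hQP.ae_le, (hCT t ht').filter_mono hQP.ae_le,
        (hCM t ht').filter_mono hQP.ae_le] with ω h1 h2 h3
      rw [abs_mul]
      exact mul_le_mul (h1 i) (le_trans (abs_sub _ _) (add_le_add (h2 i) (h3 i)))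
        (abs_nonneg _) (le_trans (abs_nonneg _) (h1 i))
    calc ∫ ω, G ω ∂Q
        = ∑ t ∈ Finset.range m, ∫ ω, ∑ i, astar t ω i * (HT t ω i - Hmid t ω i) ∂Q := by
          rw [← integral_finset_sum _ hint_sum]
          exact integral_congr_ae (ae_of_all _ fun ω => hGsum ω)
      _ = 0 := by
          refine Finset.sum_eq_zero fun t ht => ?_
          have : ∀ i : Fin n, Integrable (fun ω => astar t ω i * (HT t ω i - Hmid t ω i)) Q := by
            intro i
            have ht' := Finset.mem_range.mp ht
            refine integrable_of_ae_bound
              (((((hastar t ht').1.mono (hF_le t) le_rfl).eval).mul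
                ((((hHT_meas t ht').mono (hF_le m) le_rfl).eval).sub
                  (((hHmid_meas t ht').mono (hF_le t) le_rfl).eval))).aestronglyMeasurable)
              (C := Ca t * (CT t + CM t)) ?_
            filter_upwards [(hCa t ht').filter_mono hQP.ae_le,
              (hCT t ht').filter_mono hQP.ae_le,
              (hCM t ht').filter_mono hQP.ae_le] with ω h1 h2 h3
            rw [abs_mul]
            exact mul_le_mul (h1 i) (le_trans (abs_sub _ _) (add_le_add (h2 i) (h3 i)))
              (abs_nonneg _) (le_trans (abs_nonneg _) (h1 i))
          rw [integral_finset_sum _ fun i _ => this i]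
          exact Finset.sum_eq_zero fun i _ => hterm t ht i
  -- the Q-side lower bound
  by_cases hQint : Integrable (fun ω => Real.log ((Q.rnDeriv P ω).toReal)) Q
  swap
  · unfold relEnt
    rw [if_neg hQint]
    exact le_top
  have hq_lb : -Real.log Z' ≤ ∫ ω, Real.log ((Q.rnDeriv P ω).toReal) ∂Q := by
    set D : Ω → ℝ≥0∞ := Q.rnDeriv P with hD
    have hDmeas : Measurable D := Measure.measurable_rnDeriv Q P
    have hDpos_Q : ∀ᵐ ω ∂Q, 0 < D ω := Measure.rnDeriv_pos hQP
    have hDfin_Q : ∀ᵐ ω ∂Q, D ω < ∞ := (Measure.rnDeriv_lt_top Q P).filter_mono hQP.ae_le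
    have hDpos_P : ∀ᵐ ω ∂P, 0 < D ω := hDpos_Q.filter_mono hPQ.ae_le
    have hDfin_P : ∀ᵐ ω ∂P, D ω < ∞ := Measure.rnDeriv_lt_top Q P
    have hRmeas : Measurable fun ω => Real.exp (-G ω) / (D ω).toReal :=
      (Real.measurable_exp.comp hGmeas.neg).div hDmeas.ennreal_toReal
    have hGbddQ : ∀ᵐ ω ∂Q, |G ω| ≤ B0 := hGbdd.filter_mono hQP.ae_le
    have hGintQ : Integrable G Q := integrable_of_ae_bound hGmeas.aestronglyMeasurable hGbddQ
    have hlint : ∫⁻ ω, ENNReal.ofReal (Real.exp (-G ω) / (D ω).toReal) ∂Q = Z := by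
      have e1 : (fun ω => ENNReal.ofReal (Real.exp (-G ω) / (D ω).toReal))
          =ᵐ[Q] fun ω => ENNReal.ofReal (Real.exp (-G ω)) / D ω := by
        filter_upwards [hDpos_Q, hDfin_Q] with ω h1 h2
        rw [ENNReal.ofReal_div_of_pos (ENNReal.toReal_pos h1.ne' h2.ne),
          ENNReal.ofReal_toReal h2.ne]
      have e1' : ∫⁻ ω, ENNReal.ofReal (Real.exp (-G ω) / (D ω).toReal) ∂Q
          = ∫⁻ ω, ENNReal.ofReal (Real.exp (-G ω)) / D ω ∂Q := lintegral_congr_ae e1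
      have e2' : ∫⁻ ω, ENNReal.ofReal (Real.exp (-G ω)) / D ω ∂Q
          = ∫⁻ ω, D ω * (ENNReal.ofReal (Real.exp (-G ω)) / D ω) ∂P :=
        (lintegral_rnDeriv_mul hQP
          ((ENNReal.measurable_ofReal.comp (Real.measurable_exp.comp hGmeas.neg)).div
            hDmeas).aemeasurable).symm
      have e3' : ∫⁻ ω, D ω * (ENNReal.ofReal (Real.exp (-G ω)) / D ω) ∂P
          = ∫⁻ ω, ENNReal.ofReal (Real.exp (-G ω)) ∂P := by
        refine lintegral_congr_ae ?_
        filter_upwards [hDpos_P, hDfin_P] with ω h1 h2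
        exact ENNReal.mul_div_cancel h1.ne' h2.ne
      rw [e1', e2', e3', ← hZdef]
    have hRnonneg : 0 ≤ᵐ[Q] fun ω => Real.exp (-G ω) / (D ω).toReal :=
      ae_of_all _ fun ω => div_nonneg (Real.exp_pos _).le ENNReal.toReal_nonneg
    have hRint : Integrable (fun ω => Real.exp (-G ω) / (D ω).toReal) Q := by
      refine ⟨hRmeas.aestronglyMeasurable, ?_⟩
      rw [hasFiniteIntegral_iff_ofReal hRnonneg, hlint]
      exact hZfin.lt_top
    have hRval : ∫ ω, Real.exp (-G ω) / (D ω).toReal ∂Q = Z' := by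
      rw [integral_eq_lintegral_of_nonneg_ae hRnonneg hRmeas.aestronglyMeasurable, hlint, hZ']
    have hptwQ : ∀ᵐ ω ∂Q, 1 - Real.exp (-G ω) / (Z' * (D ω).toReal)
        ≤ Real.log ((D ω).toReal) + (G ω + Real.log Z') := by
      filter_upwards [hDpos_Q, hDfin_Q] with ω h1 h2
      have hd : 0 < (D ω).toReal := ENNReal.toReal_pos h1.ne' h2.ne
      have hx : 0 < Real.exp (-G ω) / (Z' * (D ω).toReal) := by positivity
      have hlog := Real.log_le_sub_one_of_pos hx
      rw [Real.log_div (Real.exp_ne_zero _) (by positivity), Real.log_exp,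
        Real.log_mul hZ'pos.ne' hd.ne'] at hlog
      linarith
    have hintR : Integrable (fun ω => 1 - Real.exp (-G ω) / (Z' * (D ω).toReal)) Q := by
      refine (integrable_const 1).sub ?_
      have e : (fun ω => Real.exp (-G ω) / (Z' * (D ω).toReal))
          = fun ω => (Real.exp (-G ω) / (D ω).toReal) / Z' := by
        funext ω
        rw [div_div, mul_comm]
      rw [e]
      exact hRint.div_const Z'
    have hintL : Integrable (fun ω => Real.log ((D ω).toReal) + (G ω + Real.log Z')) Q :=
      hQint.add (hGintQ.add (integrable_const _))
    have hmono := integral_mono_ae hintR hintL hptwQ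
    have hLval : ∫ ω, (1 - Real.exp (-G ω) / (Z' * (D ω).toReal)) ∂Q = 0 := by
      have e : (fun ω => 1 - Real.exp (-G ω) / (Z' * (D ω).toReal))
          = fun ω => 1 - (Real.exp (-G ω) / (D ω).toReal) / Z' := by
        funext ω
        rw [div_div, mul_comm]
      have hsub2 : ∫ ω, ((1:ℝ) - (Real.exp (-G ω) / (D ω).toReal) / Z') ∂Q
          = (∫ _ω, (1:ℝ) ∂Q) - ∫ ω, (Real.exp (-G ω) / (D ω).toReal) / Z' ∂Q :=
        integral_sub (integrable_const _) (hRint.div_const Z')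
      have hdiv : ∫ ω, (Real.exp (-G ω) / (D ω).toReal) / Z' ∂Q
          = (∫ ω, Real.exp (-G ω) / (D ω).toReal ∂Q) / Z' := integral_div _ _
      rw [e, hsub2, hdiv, integral_const, hRval, div_self hZ'pos.ne']
      simp [measure_univ]
    have hRint_val : ∫ ω, (Real.log ((D ω).toReal) + (G ω + Real.log Z')) ∂Q
        = (∫ ω, Real.log ((D ω).toReal) ∂Q) + Real.log Z' := by
      have hadd1 : ∫ ω, (Real.log ((D ω).toReal) + (G ω + Real.log Z')) ∂Q
          = (∫ ω, Real.log ((D ω).toReal) ∂Q) + ∫ ω, (G ω + Real.log Z') ∂Q :=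
        integral_add hQint (hGintQ.add (integrable_const _))
      have hadd2 : ∫ ω, (G ω + Real.log Z') ∂Q
          = (∫ ω, G ω ∂Q) + ∫ _ω, (Real.log Z' : ℝ) ∂Q :=
        integral_add hGintQ (integrable_const _)
      rw [hadd1, hadd2, integral_const, hEQG]
      simp [measure_univ]
    rw [hLval, hRint_val] at hmono
    linarith
  unfold relEnt
  rw [if_pos hint_star, if_pos hQint]
  exact EReal.coe_le_coe_iff.mpr (le_trans hstar_le hq_lb)
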